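/- Let F : [0,1]^n → ℝ be a nonnegative DR-submodular function. Then for all x, y ∈ [0,1]^n, F(x ∨ y) ≥ (1 − ‖x‖_∞) F(y), where ∨ denotes the coordinatewise maximum and ‖x‖_∞ = max_{i=1,…,n} |x_i|. -/

import Mathlib

/-- The harmonic number `H j = ∑_{k=1}^j 1/k` (with `H 0 = 0`). -/
noncomputable def harmonicNum (j : ℕ) : ℝ := ∑ k ∈ Finset.range j, (1 : ℝ) / (k + 1)

/-- `H_{2,j} = ∑_{k=1}^j 1/k²`. -/
noncomputable def harmonicNum2 (j : ℕ) : ℝ := ∑ k ∈ Finset.range j, (1 : ℝ) / ((k : ℝ) + 1) ^ 2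

/-- The time values `t_j = 1/(1 - ln(1 + H_j/H_T)) - 1` of the Frank–Wolfe algorithm. -/
noncomputable def fwTime (T j : ℕ) : ℝ :=
  1 / (1 - Real.log (1 + harmonicNum j / harmonicNum T)) - 1

/-- The Frank–Wolfe step ratio `e^{-1/(1+t_j) + 1/(1+t_{j+1})}`. -/
noncomputable def fwRatio (T j : ℕ) : ℝ :=
  Real.exp (-(1 / (1 + fwTime T j)) + 1 / (1 + fwTime T (j + 1)))

/-- `√a_{t_j} = e^{t_j/(1+t_j)}`. -/
noncomputable def fwSqa (T j : ℕ) : ℝ := Real.exp (fwTime T j / (1 + fwTime T j))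

/-- `F : [0,1]^n → ℝ` is DR-submodular: for all `x ≤ y` in `[0,1]^n`, coordinates `i` and
`a > 0` with `x + a·e_i, y + a·e_i ∈ [0,1]^n`, one has
`F(x + a·e_i) - F(x) ≥ F(y + a·e_i) - F(y)`. -/
def DRSubmodular {n : ℕ} (F : (Fin n → ℝ) → ℝ) : Prop :=
  ∀ x y : Fin n → ℝ, x ∈ Set.Icc (0 : Fin n → ℝ) 1 → y ∈ Set.Icc (0 : Fin n → ℝ) 1 →
    x ≤ y → ∀ i : Fin n, ∀ a : ℝ, 0 < a →
      x + a • (Pi.single i 1 : Fin n → ℝ) ∈ Set.Icc (0 : Fin n → ℝ) 1 →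
      y + a • (Pi.single i 1 : Fin n → ℝ) ∈ Set.Icc (0 : Fin n → ℝ) 1 →
      F (y + a • (Pi.single i 1 : Fin n → ℝ)) - F y ≤
        F (x + a • (Pi.single i 1 : Fin n → ℝ)) - F x

/-- The continuous linear map `y ↦ ⟨g, y⟩ = ∑ i, g i * y i` on `ℝⁿ`. -/
noncomputable def gradCLM {n : ℕ} (g : Fin n → ℝ) : (Fin n → ℝ) →L[ℝ] ℝ :=
  ∑ i, g i • (ContinuousLinearMap.proj i : (Fin n → ℝ) →L[ℝ] ℝ)

/-- `gradF` is the gradient of `F` on the box `[0,1]^n`: at each point of the box, `F` is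
differentiable within the box with derivative `y ↦ ⟨gradF z, y⟩`. -/
def HasGradientOnBox {n : ℕ} (F : (Fin n → ℝ) → ℝ) (gradF : (Fin n → ℝ) → Fin n → ℝ) : Prop :=
  ∀ z ∈ Set.Icc (0 : Fin n → ℝ) 1, HasFDerivWithinAt F (gradCLM (gradF z)) (Set.Icc 0 1) z

/-- If `F : [0,1]^n → ℝ` is nonnegative and DR-submodular, then for all
`x, y ∈ [0,1]^n`, `F(x ∨ y) ≥ (1 - ‖x‖_∞) F(y)`.  (On `Fin n → ℝ` the default norm `‖·‖`
is exactly the sup norm `max_i |x_i|`.) -/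
lemma weakDR {n : ℕ} {F : (Fin n → ℝ) → ℝ} (hDR : DRSubmodular F)
    {z z' w : Fin n → ℝ} (hz : z ∈ Set.Icc (0:Fin n → ℝ) 1) (hz' : z' ∈ Set.Icc (0:Fin n → ℝ) 1)
    (hzz' : z ≤ z') (hw : 0 ≤ w)
    (hzw : z + w ∈ Set.Icc (0:Fin n → ℝ) 1) (hz'w : z' + w ∈ Set.Icc (0:Fin n → ℝ) 1) :
    F (z' + w) - F z' ≤ F (z + w) - F z := by
  classical
  have key : ∀ s : Finset (Fin n),
      F (z' + fun j => if j ∈ s then w j else 0) - F z'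
        ≤ F (z + fun j => if j ∈ s then w j else 0) - F z := by
    intro s
    induction s using Finset.induction_on with
    | empty =>
      have h0 : (fun j => if j ∈ (∅ : Finset (Fin n)) then w j else 0) = (0 : Fin n → ℝ) := by
        funext j; simp
      rw [h0, add_zero, add_zero]
      simp
    | @insert i s hi ih =>
      set ws : Fin n → ℝ := fun j => if j ∈ s then w j else 0 with hws
      have hnext : (fun j => if j ∈ insert i s then w j else 0)
          = ws + w i • (Pi.single i 1 : Fin n → ℝ) := by
        funext j
        by_cases hj : j = i
        · subst hj
          simp [hws, hi, Pi.single_apply]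
        · simp [hws, Pi.single_apply, hj, Finset.mem_insert]
      have hws_nonneg : (0 : Fin n → ℝ) ≤ ws := by
        intro j; by_cases hj : j ∈ s <;> simp [hws, hj] <;> exact hw j
      have hws_le : ws ≤ w := by
        intro j; by_cases hj : j ∈ s <;> simp [hws, hj] <;> exact hw j
      have hnext_nonneg : (0 : Fin n → ℝ) ≤ ws + w i • (Pi.single i 1 : Fin n → ℝ) := by
        rw [← hnext]; intro j; by_cases hj : j ∈ insert i s <;> simp [hj] <;> exact hw j
      have hnext_le : ws + w i • (Pi.single i 1 : Fin n → ℝ) ≤ w := by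
        rw [← hnext]; intro j; by_cases hj : j ∈ insert i s <;> simp [hj] <;> exact hw j
      have memzws : z + ws ∈ Set.Icc (0:Fin n → ℝ) 1 :=
        ⟨le_add_of_le_of_nonneg hz.1 hws_nonneg,
         le_trans (add_le_add le_rfl hws_le) hzw.2⟩
      have memz'ws : z' + ws ∈ Set.Icc (0:Fin n → ℝ) 1 :=
        ⟨le_add_of_le_of_nonneg hz'.1 hws_nonneg,
         le_trans (add_le_add le_rfl hws_le) hz'w.2⟩
      have memznext : z + ws + w i • (Pi.single i 1 : Fin n → ℝ) ∈ Set.Icc (0:Fin n → ℝ) 1 := by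
        rw [add_assoc]
        exact ⟨le_add_of_le_of_nonneg hz.1 hnext_nonneg,
          le_trans (add_le_add le_rfl hnext_le) hzw.2⟩
      have memz'next : z' + ws + w i • (Pi.single i 1 : Fin n → ℝ) ∈ Set.Icc (0:Fin n → ℝ) 1 := by
        rw [add_assoc]
        exact ⟨le_add_of_le_of_nonneg hz'.1 hnext_nonneg,
          le_trans (add_le_add le_rfl hnext_le) hz'w.2⟩
      rcases (hw i).lt_or_eq with hwi | hwi
      · have hstep := hDR (z + ws) (z' + ws) memzws memz'ws
          (add_le_add hzz' le_rfl) i (w i) hwi memznext memz'next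
        rw [hnext, ← add_assoc, ← add_assoc]
        linarith
      · have : w i • (Pi.single i 1 : Fin n → ℝ) = 0 := by rw [← hwi]; simp
        rw [hnext, this, add_zero]
        exact ih
  have huniv : (fun j => if j ∈ (Finset.univ : Finset (Fin n)) then w j else 0) = w := by
    funext j; simp
  have := key Finset.univ
  rwa [huniv] at this

theorem drSubmodular_join_lower_bound
    (n : ℕ) (F : (Fin n → ℝ) → ℝ)
    (hFnonneg : ∀ z ∈ Set.Icc (0 : Fin n → ℝ) 1, 0 ≤ F z)
    (hDR : DRSubmodular F) :
    ∀ x ∈ Set.Icc (0 : Fin n → ℝ) 1, ∀ y ∈ Set.Icc (0 : Fin n → ℝ) 1,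
      F (x ⊔ y) ≥ (1 - ‖x‖) * F y := by
  intro x hx y hy
  rcases (norm_nonneg x).eq_or_lt with hu0 | hu
  · have hx0 : x = 0 := norm_eq_zero.mp hu0.symm
    have hxy : x ⊔ y = y := by rw [hx0]; exact sup_eq_right.mpr hy.1
    rw [hxy, ← hu0]
    simp
  · set u := ‖x‖ with hu_def
    have hu1 : u ≤ 1 := by
      rw [hu_def, pi_norm_le_iff_of_nonneg (by norm_num : (0:ℝ) ≤ 1)]
      intro i
      have h1 : (0:ℝ) ≤ x i := hx.1 i
      have h2 : x i ≤ 1 := hx.2 i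
      rw [Real.norm_eq_abs, abs_le]
      exact ⟨by linarith, h2⟩
    have hxiu : ∀ i, x i ≤ u := fun i =>
      le_trans (le_abs_self _) (by rw [← Real.norm_eq_abs]; exact norm_le_pi_norm x i)
    set s : ℝ := 1/u with hs_def
    have hsu : s * u = 1 := by rw [hs_def]; field_simp
    have hs0 : 0 < s := by rw [hs_def]; positivity
    have hs1 : 1 ≤ s := by
      nlinarith
    obtain ⟨v, hv_def⟩ : ∃ v : Fin n → ℝ, v = x ⊔ y - y := ⟨_, rfl⟩
    have hvi : ∀ i, v i = max (x i) (y i) - y i := by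
      intro i; simp [hv_def, Pi.sup_apply]
    have hv : 0 ≤ v := by
      intro i; rw [hvi i]; simp [le_max_right]
    -- points on the segment stay in the box
    have hPmem : ∀ t : ℝ, 0 ≤ t → t ≤ s → y + t • v ∈ Set.Icc (0:Fin n → ℝ) 1 := by
      intro t ht0 hts
      constructor
      · intro i
        simp only [Pi.add_apply, Pi.smul_apply, smul_eq_mul, Pi.zero_apply]
        exact add_nonneg (hy.1 i) (mul_nonneg ht0 (hv i))
      · intro i
        simp only [Pi.add_apply, Pi.smul_apply, smul_eq_mul, Pi.one_apply]
        rcases (hv i).eq_or_lt with h0 | hpos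
        · rw [← h0]; simpa using hy.2 i
        · have hxyi : y i ≤ x i := by
            by_contra hc
            push_neg at hc
            rw [hvi i, max_eq_right hc.le] at hpos
            simp at hpos
          have hvix : v i = x i - y i := by rw [hvi i, max_eq_left hxyi]
          have h1 : t * v i ≤ s * v i := mul_le_mul_of_nonneg_right hts (hv i)
          have h2 : s * x i ≤ s * u := mul_le_mul_of_nonneg_left (hxiu i) hs0.le
          have h3 : 0 ≤ (s - 1) * y i := mul_nonneg (by linarith) (hy.1 i)
          rw [hvix] at h1
          nlinarith [hy.1 i]
    -- equal-size increments along the segment are non-increasing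
    have hstep : ∀ t1 t2 a : ℝ, 0 ≤ t1 → t1 ≤ t2 → 0 ≤ a → t2 + a ≤ s →
        F (y + (t2+a) • v) - F (y + t2 • v) ≤ F (y + (t1+a) • v) - F (y + t1 • v) := by
      intro t1 t2 a h01 h12 ha h2s
      have e1 : y + t1 • v + a • v = y + (t1+a) • v := by rw [add_assoc, ← add_smul]
      have e2 : y + t2 • v + a • v = y + (t2+a) • v := by rw [add_assoc, ← add_smul]
      have := weakDR hDR (z := y + t1 • v) (z' := y + t2 • v) (w := a • v)
        (hPmem t1 h01 (by linarith)) (hPmem t2 (by linarith) (by linarith))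
        (by
          intro i
          simp only [Pi.add_apply, Pi.smul_apply, smul_eq_mul]
          exact add_le_add le_rfl (mul_le_mul_of_nonneg_right h12 (hv i)))
        (by
          intro i
          simp only [Pi.smul_apply, smul_eq_mul, Pi.zero_apply]
          exact mul_nonneg ha (hv i))
        (by rw [e1]; exact hPmem (t1+a) (by linarith) (by linarith))
        (by rw [e2]; exact hPmem (t2+a) (by linarith) h2s)
      rw [e1, e2] at this
      exact this
    set A : ℝ := F y with hA_def
    set Bv : ℝ := F (y + s • v) with hB_def
    have hA0 : 0 ≤ A := hFnonneg y hy
    have hB0 : 0 ≤ Bv := hFnonneg _ (hPmem s hs0.le le_rfl)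
    obtain ⟨ψ, hψ_def⟩ : ∃ ψ : ℝ → ℝ, ψ = fun t => (1-t) * A + t * Bv - F (y + (t*s) • v) :=
      ⟨_, rfl⟩
    have hψ0 : ψ 0 = 0 := by simp [hψ_def, hA_def]
    have hψ1 : ψ 1 = 0 := by simp [hψ_def, hB_def]
    have hψmid : ∀ a b : ℝ, 0 ≤ a → a ≤ b → b ≤ 1 → ψ ((a+b)/2) ≤ (ψ a + ψ b)/2 := by
      intro a b ha hab hb1
      have key : F (y + (b*s) • v) - F (y + (((a+b)/2)*s) • v)
          ≤ F (y + (((a+b)/2)*s) • v) - F (y + (a*s) • v) := by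
        have h1 : a*s + (b-a)/2*s = ((a+b)/2)*s := by ring
        have h2 : ((a+b)/2)*s + (b-a)/2*s = b*s := by ring
        have := hstep (a*s) (((a+b)/2)*s) ((b-a)/2*s)
          (mul_nonneg ha hs0.le)
          (by nlinarith)
          (by nlinarith)
          (by rw [h2]; nlinarith)
        rw [h1, h2] at this
        exact this
      simp only [hψ_def]
      linarith
    have hψub : ∀ t : ℝ, 0 ≤ t → t ≤ 1 → ψ t ≤ A + Bv := by
      intro t ht0 ht1
      have hmem : y + (t*s) • v ∈ Set.Icc (0:Fin n → ℝ) 1 :=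
        hPmem (t*s) (mul_nonneg ht0 hs0.le) (by nlinarith)
      have := hFnonneg _ hmem
      simp only [hψ_def]
      nlinarith
    have hψle : ∀ t : ℝ, 0 ≤ t → t ≤ 1 → ψ t ≤ 0 := by
      intro t ht0 ht1
      by_contra hpos
      push_neg at hpos
      have grow : ∀ k : ℕ, ∃ r, 0 ≤ r ∧ r ≤ 1 ∧ 2^k * ψ t ≤ ψ r := by
        intro k
        induction k with
        | zero => exact ⟨t, ht0, ht1, by simp⟩
        | succ k ih =>
          obtain ⟨r, hr0, hr1, hr⟩ := ih
          have h2k : (0:ℝ) < 2^k * ψ t := by positivity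
          have hψr : 0 < ψ r := lt_of_lt_of_le h2k hr
          have hpow : (2:ℝ)^(k+1) * ψ t = 2 * (2^k * ψ t) := by ring
          rcases le_or_gt r (1/2) with hhalf | hhalf
          · refine ⟨2*r, by linarith, by linarith, ?_⟩
            have hm := hψmid 0 (2*r) le_rfl (by linarith) (by linarith)
            have harg : (0 + 2*r)/2 = r := by ring
            rw [harg, hψ0] at hm
            rw [hpow]
            linarith
          · refine ⟨2*r - 1, by linarith, by linarith, ?_⟩
            have hm := hψmid (2*r-1) 1 (by linarith) (by linarith) le_rfl
            have harg : ((2*r-1) + 1)/2 = r := by ring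
            rw [harg, hψ1] at hm
            rw [hpow]
            linarith
      obtain ⟨k, hk⟩ := pow_unbounded_of_one_lt ((A+Bv)/ψ t) (by norm_num : (1:ℝ) < 2)
      obtain ⟨r, hr0, hr1, hr⟩ := grow k
      have hub := hψub r hr0 hr1
      have hlt : (A+Bv)/ψ t * ψ t < 2^k * ψ t := mul_lt_mul_of_pos_right hk hpos
      rw [div_mul_cancel₀ _ (ne_of_gt hpos)] at hlt
      linarith
    have hfin := hψle u (by linarith) hu1
    have hus : u * s = 1 := by rw [mul_comm]; exact hsu
    simp only [hψ_def, hus, one_smul] at hfin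
    have hyv : y + v = x ⊔ y := by rw [hv_def]; abel
    rw [hyv] at hfin
    have : u * Bv ≥ 0 := mul_nonneg (by linarith) hB0
    rw [ge_iff_le, hu_def]
    linarith
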